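/- For s+1 distinct sample indices and the block structure of Theorem 3's matrix, the determinant of A_{s+1} expands as |A_{s+1}| = P(h_{s+1})·|A_s| + R(h_1,…,h_{s+1}), where P is a nonzero monomial in h_{s+1} of degree l_{3s}+l_{3s+1}+l_{3s+2} and R has strictly smaller degree in h_{s+1}; consequently, if |A_s| is a nonzero polynomial in (h_1,…,h_s), then |A_{s+1}| is a nonzero polynomial in (h_1,…,h_{s+1}). -/

import Mathlib

open Matrix MvPolynomial

/-- The `3s × 3s` confluent Vandermonde-type matrix of Theorem 3, with entries
`l_k ^ (i mod 3) * h_j ^ (l_k)` regarded as polynomials in the variables `h_1, …, h_s`. -/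
noncomputable def Amat (s : ℕ) (l : Fin (3 * s) → ℕ) :
    Matrix (Fin (3 * s)) (Fin (3 * s)) (MvPolynomial (Fin s) ℂ) :=
  Matrix.of fun r k =>
    ((l k : MvPolynomial (Fin s) ℂ)) ^ ((r : ℕ) % 3) *
      (MvPolynomial.X (⟨(r : ℕ) / 3, by have := r.isLt; omega⟩ : Fin s)) ^ (l k)

noncomputable def phiA (s : ℕ) :
    MvPolynomial (Fin (s+1)) ℂ →ₐ[ℂ] Polynomial (MvPolynomial (Fin s) ℂ) :=
  (MvPolynomial.finSuccEquiv ℂ s).toAlgHom.comp (MvPolynomial.rename (finRotate (s+1)))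

lemma phiA_X_last (s : ℕ) : phiA s (X (Fin.last s)) = Polynomial.X := by
  simp [phiA, finRotate_last, finSuccEquiv_X_zero]

lemma phiA_X_castSucc (s : ℕ) (i : Fin s) : phiA s (X i.castSucc) = Polynomial.C (X i) := by
  have h : finRotate (s+1) i.castSucc = i.succ := by
    rw [finRotate_succ_apply, Fin.coeSucc_eq_succ]
  simp [phiA, h, finSuccEquiv_X_succ]

lemma phiA_C (s : ℕ) (a : ℂ) : phiA s (C a) = Polynomial.C (C a) := by
  simp [phiA]

lemma phiA_rename (s : ℕ) (p : MvPolynomial (Fin s) ℂ) :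
    phiA s (rename Fin.castSucc p) = Polynomial.C p := by
  induction p using MvPolynomial.induction_on with
  | C a => simp [phiA_C]
  | add p q hp hq => simp only [map_add, hp, hq]
  | mul_X p i hp =>
      rw [_root_.map_mul, _root_.map_mul, hp, rename_X, phiA_X_castSucc, Polynomial.C_mul]

lemma natDegree_phiA (s : ℕ) (p : MvPolynomial (Fin (s+1)) ℂ) :
    (phiA s p).natDegree = p.degreeOf (Fin.last s) := by
  show ((finSuccEquiv ℂ s) (rename (finRotate (s+1)) p)).natDegree = _
  rw [natDegree_finSuccEquiv]
  have := degreeOf_rename_of_injective (p := p) (f := finRotate (s+1))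
    (Equiv.injective _) (Fin.last s)
  rwa [finRotate_last] at this

section Main
variable (s : ℕ) (l : Fin (3*(s+1)) → ℕ)

def bb (j : Fin 3) : Fin (3*(s+1)) := ⟨3*s + (j : ℕ), by omega⟩

lemma bb_val (j : Fin 3) : ((bb s j : Fin (3*(s+1))) : ℕ) = 3*s + (j:ℕ) := rfl

noncomputable def Bm : Matrix (Fin (3*(s+1))) (Fin (3*(s+1)))
    (Polynomial (MvPolynomial (Fin s) ℂ)) :=
  (Amat (s+1) l).map (phiA s)

lemma Bm_top (r k : Fin (3*(s+1))) (h : (r : ℕ) < 3*s) :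
    Bm s l r k = Polynomial.C ((l k : MvPolynomial (Fin s) ℂ) ^ ((r:ℕ)%3)
      * X (⟨(r:ℕ)/3, by omega⟩ : Fin s) ^ (l k)) := by
  have hx : (⟨(r:ℕ)/3, by have := r.isLt; omega⟩ : Fin (s+1))
      = Fin.castSucc (⟨(r:ℕ)/3, by omega⟩ : Fin s) := rfl
  simp only [Bm, Matrix.map_apply, Amat, Matrix.of_apply]
  rw [_root_.map_mul, _root_.map_pow, _root_.map_pow, map_natCast, hx, phiA_X_castSucc,
    Polynomial.C_mul, Polynomial.C_pow, Polynomial.C_pow, map_natCast]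

lemma Bm_bot (r k : Fin (3*(s+1))) (h : 3*s ≤ (r : ℕ)) :
    Bm s l r k = Polynomial.C ((l k : MvPolynomial (Fin s) ℂ) ^ ((r:ℕ)%3))
      * Polynomial.X ^ (l k) := by
  have hx : (⟨(r:ℕ)/3, by have := r.isLt; omega⟩ : Fin (s+1)) = Fin.last s := by
    have := r.isLt
    exact Fin.ext (by simp only [Fin.val_last]; omega)
  simp only [Bm, Matrix.map_apply, Amat, Matrix.of_apply]
  rw [_root_.map_mul, _root_.map_pow, _root_.map_pow, map_natCast, hx, phiA_X_last,
    Polynomial.C_pow, map_natCast]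

noncomputable def Bp : Matrix (Fin (3*(s+1))) (Fin (3*(s+1))) (MvPolynomial (Fin s) ℂ) :=
  Matrix.of fun r k =>
    if h : (r:ℕ) < 3*s then
      (l k : MvPolynomial (Fin s) ℂ) ^ ((r:ℕ)%3) * X (⟨(r:ℕ)/3, by omega⟩ : Fin s) ^ (l k)
    else if (k:ℕ) < 3*s then 0 else (l k : MvPolynomial (Fin s) ℂ) ^ ((r:ℕ)%3)

lemma det_Bp :
    (Bp s l).det = C ((vandermonde fun j : Fin 3 => ((l (bb s j) : ℂ))).det)
      * (Amat s (fun k => l (Fin.castLE (by have := 0; omega) k))).det := by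
  set l' : Fin (3*s) → ℕ := fun k => l (Fin.castLE (by omega) k) with hl'
  set v : Fin 3 → ℂ := fun j => ((l (bb s j) : ℂ)) with hv
  let e : Fin (3*(s+1)) ≃ Fin (3*s) ⊕ Fin 3 :=
    (finCongr (by ring)).trans finSumFinEquiv.symm
  have he1 : ∀ (r : Fin (3*(s+1))) (h : (r:ℕ) < 3*s), e r = Sum.inl ⟨(r:ℕ), h⟩ := by
    intro r h
    simp only [e, Equiv.trans_apply]
    rw [Equiv.symm_apply_eq, finSumFinEquiv_apply_left]
    refine Fin.ext ?_
    have hc : ((finCongr (show 3*(s+1) = 3*s+3 by ring) r : Fin (3*s+3)) : ℕ) = (r:ℕ) := rfl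
    simp only [Fin.coe_castAdd]
    exact hc
  have he2 : ∀ (r : Fin (3*(s+1))) (h : ¬ (r:ℕ) < 3*s),
      e r = Sum.inr ⟨(r:ℕ) - 3*s, by have := r.isLt; omega⟩ := by
    intro r h
    simp only [e, Equiv.trans_apply]
    rw [Equiv.symm_apply_eq, finSumFinEquiv_apply_right]
    refine Fin.ext ?_
    have hc : ((finCongr (show 3*(s+1) = 3*s+3 by ring) r : Fin (3*s+3)) : ℕ) = (r:ℕ) := rfl
    simp only [Fin.coe_natAdd, hc]
    have := r.isLt; omega
  set M12 : Matrix (Fin (3*s)) (Fin 3) (MvPolynomial (Fin s) ℂ) :=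
    Matrix.of fun r j => (l (bb s j) : MvPolynomial (Fin s) ℂ) ^ ((r:ℕ)%3)
      * X (⟨(r:ℕ)/3, by have := r.isLt; omega⟩ : Fin s) ^ (l (bb s j)) with hM12
  set M22 : Matrix (Fin 3) (Fin 3) (MvPolynomial (Fin s) ℂ) :=
    Matrix.of fun m j => (l (bb s j) : MvPolynomial (Fin s) ℂ) ^ (m:ℕ) with hM22
  have hBp : Bp s l = (fromBlocks (Amat s l') M12 0 M22).submatrix e e := by
    refine Matrix.ext fun r k => ?_
    simp only [Bp, Matrix.of_apply, Matrix.submatrix_apply]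
    by_cases hr : (r:ℕ) < 3*s
    · rw [dif_pos hr, he1 r hr]
      by_cases hk : (k:ℕ) < 3*s
      · rw [he1 k hk, Matrix.fromBlocks_apply₁₁]
        have : l' ⟨(k:ℕ), hk⟩ = l k := rfl
        simp only [Amat, Matrix.of_apply, this]
      · rw [he2 k hk, Matrix.fromBlocks_apply₁₂]
        have hbk : bb s ⟨(k:ℕ) - 3*s, by have := k.isLt; omega⟩ = k := by
          refine Fin.ext ?_; simp only [bb]; omega
        simp only [hM12, Matrix.of_apply, hbk]
    · rw [dif_neg hr, he2 r hr]
      by_cases hk : (k:ℕ) < 3*s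
      · rw [if_pos hk, he1 k hk, Matrix.fromBlocks_apply₂₁]
        rfl
      · rw [if_neg hk, he2 k hk, Matrix.fromBlocks_apply₂₂]
        have hbk : bb s ⟨(k:ℕ) - 3*s, by have := k.isLt; omega⟩ = k := by
          refine Fin.ext ?_; simp only [bb]; omega
        simp only [hM22, Matrix.of_apply, hbk]
        congr 1
        have := r.isLt; omega
  have hM22' : M22 = ((vandermonde v)ᵀ).map (C : ℂ →+* MvPolynomial (Fin s) ℂ) := by
    ext m j
    simp only [hM22, Matrix.of_apply, Matrix.map_apply, Matrix.transpose_apply,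
      vandermonde_apply, hv, map_pow, map_natCast]
  rw [hBp, Matrix.det_submatrix_equiv_self, Matrix.det_fromBlocks_zero₂₁, hM22',
    ← RingHom.mapMatrix_apply, ← RingHom.map_det, Matrix.det_transpose, mul_comm]

def LL : ℕ := l ⟨3*s, by have := 0; omega⟩ + l ⟨3*s+1, by have := 0; omega⟩ + l ⟨3*s+2, by have := 0; omega⟩

lemma key3 (hl : StrictMono l) {a b c : Fin (3*(s+1))} (hab : a < b) (hbc : b < c) :
    l a + l b + l c ≤ LL s l ∧ ((a:ℕ) < 3*s → l a + l b + l c < LL s l) := by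
  have v1 : (a:ℕ) < (b:ℕ) := hab
  have v2 : (b:ℕ) < (c:ℕ) := hbc
  have v3 := c.isLt
  have h0 : l a ≤ l ⟨3*s, by omega⟩ := hl.monotone (show (a:ℕ) ≤ 3*s by omega)
  have h1 : l b ≤ l ⟨3*s+1, by omega⟩ := hl.monotone (show (b:ℕ) ≤ 3*s+1 by omega)
  have h2 : l c ≤ l ⟨3*s+2, by omega⟩ := hl.monotone (show (c:ℕ) ≤ 3*s+2 by omega)
  refine ⟨by unfold LL; omega, fun ha => ?_⟩
  have h0' : l a < l ⟨3*s, by omega⟩ := hl (show a < ⟨3*s, by omega⟩ from ha)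
  unfold LL; omega

lemma sum3 (hl : StrictMono l) {a b c : Fin (3*(s+1))} (hab : a ≠ b) (hac : a ≠ c)
    (hbc : b ≠ c) :
    l a + l b + l c ≤ LL s l ∧
      (¬(3*s ≤ (a:ℕ) ∧ 3*s ≤ (b:ℕ) ∧ 3*s ≤ (c:ℕ)) → l a + l b + l c < LL s l) := by
  rcases hab.lt_or_gt with h1 | h1 <;> rcases hac.lt_or_gt with h2 | h2 <;>
    rcases hbc.lt_or_gt with h3 | h3 <;>
    [ obtain ⟨P, Q⟩ := key3 s l hl h1 h3;
      obtain ⟨P, Q⟩ := key3 s l hl h2 h3;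
      exact absurd (h1.trans h3) (not_lt.2 h2.le);
      obtain ⟨P, Q⟩ := key3 s l hl h2 h1;
      obtain ⟨P, Q⟩ := key3 s l hl h1 h2;
      exact absurd (h2.trans h3) (not_lt.2 h1.le);
      obtain ⟨P, Q⟩ := key3 s l hl h3 h2;
      obtain ⟨P, Q⟩ := key3 s l hl h3 h1] <;>
  · have w1 : ¬ ((a:ℕ) = (b:ℕ)) := fun h => hab (Fin.ext h)
    have w2 : ¬ ((a:ℕ) = (c:ℕ)) := fun h => hac (Fin.ext h)
    have w3 : ¬ ((b:ℕ) = (c:ℕ)) := fun h => hbc (Fin.ext h)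
    refine ⟨by omega, fun hne => ?_⟩
    have hQ := Q (by omega)
    omega

lemma key_perm (hl : StrictMono l) (σ : Equiv.Perm (Fin (3*(s+1)))) (m : ℕ)
    (hm : LL s l ≤ m) :
    (∏ i, Bm s l (σ i) i).coeff m
      = if m = LL s l then ∏ i, Bp s l (σ i) i else 0 := by
  classical
  set S : Finset (Fin (3*(s+1))) := Finset.univ.filter (fun i => 3*s ≤ ((σ i : ℕ))) with hS
  have hmemS : ∀ i, i ∈ S ↔ 3*s ≤ ((σ i : ℕ)) := fun i => by simp [hS]
  set x : Fin 3 → Fin (3*(s+1)) := fun j => σ⁻¹ (bb s j) with hx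
  have hrowx : ∀ j, σ (x j) = bb s j := fun j => Equiv.apply_symm_apply σ _
  have hxd : ∀ j j' : Fin 3, j ≠ j' → x j ≠ x j' := by
    intro j j' hjj h
    have h2 : bb s j = bb s j' := (Equiv.injective σ⁻¹) h
    have h3 : (3*s + (j:ℕ)) = 3*s + (j':ℕ) := congrArg Fin.val h2
    exact hjj (Fin.ext (by omega))
  have d01 : x 0 ≠ x 1 := hxd 0 1 (by decide)
  have d02 : x 0 ≠ x 2 := hxd 0 2 (by decide)
  have d12 : x 1 ≠ x 2 := hxd 1 2 (by decide)
  have hiff : ∀ i, ∀ j : Fin 3, i = x j ↔ ((σ i : ℕ)) = 3*s + (j:ℕ) := by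
    intro i j
    constructor
    · rintro rfl
      rw [hrowx j, bb_val]
    · intro h
      have hσ : σ i = bb s j := Fin.ext (by rw [bb_val]; exact h)
      rw [hx]
      simp only []
      rw [← hσ, Equiv.Perm.inv_def, Equiv.symm_apply_apply]
  have hSeq : S = {x 0, x 1, x 2} := by
    ext i
    have h3 := (σ i).isLt
    simp only [hmemS, Finset.mem_insert, Finset.mem_singleton, hiff i]
    have e0 : ((0:Fin 3):ℕ) = 0 := rfl
    have e1 : ((1:Fin 3):ℕ) = 1 := rfl
    have e2 : ((2:Fin 3):ℕ) = 2 := rfl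
    rw [e0, e1, e2]
    omega
  have hcardS : S.card = 3 := by
    rw [hSeq, Finset.card_insert_of_notMem (by simp [d01, d02]),
      Finset.card_insert_of_notMem (by simp [d12]), Finset.card_singleton]
  set T : Finset (Fin (3*(s+1))) := Finset.univ.filter (fun i => 3*s ≤ (i:ℕ)) with hT
  have hTeq : T = {(⟨3*s, by omega⟩ : Fin (3*(s+1))), ⟨3*s+1, by omega⟩, ⟨3*s+2, by omega⟩} := by
    ext i
    have h3 := i.isLt
    simp only [hT, Finset.mem_filter, Finset.mem_univ, true_and, Finset.mem_insert,
      Finset.mem_singleton, Fin.ext_iff]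
    omega
  have hcardT : T.card = 3 := by
    rw [hTeq, Finset.card_insert_of_notMem
        (by simp only [Finset.mem_insert, Finset.mem_singleton, Fin.ext_iff]; omega),
      Finset.card_insert_of_notMem
        (by simp only [Finset.mem_singleton, Fin.ext_iff]; omega),
      Finset.card_singleton]
  have htop : ∀ i ∈ Sᶜ, Bm s l (σ i) i = Polynomial.C (Bp s l (σ i) i) := by
    intro i hi
    have hi' : ((σ i : ℕ)) < 3*s := by
      have := (Finset.mem_compl.1 hi)
      rw [hmemS] at this
      omega
    rw [Bm_top s l _ _ hi']
    simp only [Bp, Matrix.of_apply, dif_pos hi']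
  have hbot : ∀ i ∈ S, Bm s l (σ i) i
      = Polynomial.C ((l i : MvPolynomial (Fin s) ℂ) ^ ((σ i : ℕ)%3)) * Polynomial.X ^ (l i) :=
    fun i hi => Bm_bot s l _ _ ((hmemS i).1 hi)
  have hsplitB : (∏ i, Bm s l (σ i) i)
      = Polynomial.C ((∏ i ∈ Sᶜ, Bp s l (σ i) i)
          * ∏ i ∈ S, (l i : MvPolynomial (Fin s) ℂ) ^ ((σ i : ℕ)%3))
        * Polynomial.X ^ (∑ i ∈ S, l i) := by
    rw [← Finset.prod_compl_mul_prod S, Finset.prod_congr rfl htop, Finset.prod_congr rfl hbot,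
      ← map_prod, Finset.prod_mul_distrib, ← map_prod, Finset.prod_pow_eq_pow_sum,
      ← mul_assoc, ← _root_.map_mul]
  rw [hsplitB, Polynomial.coeff_C_mul, Polynomial.coeff_X_pow]
  have hesum : ∑ i ∈ S, l i = l (x 0) + l (x 1) + l (x 2) := by
    rw [hSeq, Finset.sum_insert (by simp [d01, d02]), Finset.sum_insert (by simp [d12]),
      Finset.sum_singleton]
    ring
  have hsum := sum3 s l hl d01 d02 d12
  by_cases hall : 3*s ≤ ((x 0 : ℕ)) ∧ 3*s ≤ ((x 1 : ℕ)) ∧ 3*s ≤ ((x 2 : ℕ))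
  · have hST : S = T := by
      refine Finset.eq_of_subset_of_card_le ?_ (by rw [hcardS, hcardT])
      intro i hi
      rw [hSeq] at hi
      simp only [Finset.mem_insert, Finset.mem_singleton] at hi
      have : 3*s ≤ (i:ℕ) := by
        rcases hi with rfl|rfl|rfl
        exacts [hall.1, hall.2.1, hall.2.2]
      simp [hT, this]
    have heL : ∑ i ∈ S, l i = LL s l := by
      rw [hST, hTeq, Finset.sum_insert
          (by simp only [Finset.mem_insert, Finset.mem_singleton, Fin.ext_iff]; omega),
        Finset.sum_insert (by simp only [Finset.mem_singleton, Fin.ext_iff]; omega),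
        Finset.sum_singleton]
      unfold LL
      ring
    rw [heL]
    by_cases hmL : m = LL s l
    · rw [if_pos hmL, if_pos hmL, mul_one, ← Finset.prod_compl_mul_prod S]
      congr 1
      refine Finset.prod_congr rfl fun i hi => ?_
      have hiv : 3*s ≤ (i:ℕ) := by
        rw [hST, hT] at hi
        simpa using hi
      have hrv : 3*s ≤ ((σ i : ℕ)) := (hmemS i).1 hi
      simp only [Bp, Matrix.of_apply, dif_neg (not_lt.2 hrv), if_neg (not_lt.2 hiv)]
    · rw [if_neg hmL, if_neg hmL, mul_zero]
  · have hlt : ∑ i ∈ S, l i < LL s l := by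
      rw [hesum]
      exact hsum.2 hall
    rw [if_neg (by omega), mul_zero]
    by_cases hmL : m = LL s l
    · rw [if_pos hmL]
      rw [not_and_or, not_and_or] at hall
      have hex : ∃ j : Fin 3, ((x j : ℕ)) < 3*s := by
        rcases hall with h|h|h
        exacts [⟨0, by omega⟩, ⟨1, by omega⟩, ⟨2, by omega⟩]
      obtain ⟨j, hj⟩ := hex
      symm
      refine Finset.prod_eq_zero (Finset.mem_univ (x j)) ?_
      rw [hrowx j]
      simp only [Bp, Matrix.of_apply, bb_val]
      simp only [dif_neg (show ¬ (3*s + (j:ℕ) < 3*s) by omega), if_pos hj]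
    · rw [if_neg hmL]

lemma coeff_detB (hl : StrictMono l) (m : ℕ) (hm : LL s l ≤ m) :
    ((Bm s l).det).coeff m = if m = LL s l then (Bp s l).det else 0 := by
  have hterm : ∀ σ : Equiv.Perm (Fin (3*(s+1))),
      (Equiv.Perm.sign σ • ∏ i, Bm s l (σ i) i).coeff m
        = if m = LL s l then Equiv.Perm.sign σ • ∏ i, Bp s l (σ i) i else 0 := by
    intro σ
    rw [Units.smul_def, Polynomial.coeff_smul, key_perm s l hl σ m hm]
    split
    · rw [Units.smul_def]
    · rw [smul_zero]
  rw [Matrix.det_apply, Matrix.det_apply, Polynomial.finset_sum_coeff,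
    Finset.sum_congr rfl fun σ _ => hterm σ]
  split
  · rfl
  · exact Finset.sum_const_zero

end Main

theorem stmt_18 (s : ℕ) (l : Fin (3 * (s + 1)) → ℕ) (hl : StrictMono l) :
    ∃ (cc : ℂ) (R : MvPolynomial (Fin (s + 1)) ℂ),
      cc ≠ 0 ∧
      (Amat (s + 1) l).det =
        MvPolynomial.C cc *
          MvPolynomial.X (Fin.last s) ^
            (l ⟨3 * s, by omega⟩ + l ⟨3 * s + 1, by omega⟩ + l ⟨3 * s + 2, by omega⟩) *
          MvPolynomial.rename Fin.castSucc
            (Amat s (fun k => l (Fin.castLE (by omega) k))).det + R ∧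
      R.degreeOf (Fin.last s) <
        l ⟨3 * s, by omega⟩ + l ⟨3 * s + 1, by omega⟩ + l ⟨3 * s + 2, by omega⟩ ∧
      ((Amat s (fun k => l (Fin.castLE (by omega) k))).det ≠ 0 →
        (Amat (s + 1) l).det ≠ 0) := by
  classical
  have hccne : (vandermonde fun j : Fin 3 => ((l (bb s j) : ℂ))).det ≠ 0 := by
    rw [Matrix.det_vandermonde_ne_zero_iff]
    intro j j' h
    have h1 : l (bb s j) = l (bb s j') := Nat.cast_injective h
    have h2 := hl.injective h1
    have h3 : (3*s + (j:ℕ)) = 3*s + (j':ℕ) := congrArg Fin.val h2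
    exact Fin.ext (by omega)
  set cc : ℂ := (vandermonde fun j : Fin 3 => ((l (bb s j) : ℂ))).det with hcc
  set D : MvPolynomial (Fin s) ℂ := (Amat s (fun k => l (Fin.castLE (by omega) k))).det with hD
  have hQB : phiA s ((Amat (s+1) l).det) = (Bm s l).det := by
    have h := RingHom.map_det (phiA s).toRingHom (Amat (s+1) l)
    simpa [Bm, RingHom.mapMatrix_apply] using h
  have key : ∀ m, LL s l ≤ m → (phiA s ((Amat (s+1) l).det)).coeff m
      = if m = LL s l then C cc * D else 0 := by
    intro m hm
    rw [hQB, coeff_detB s l hl m hm]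
    by_cases h : m = LL s l
    · rw [if_pos h, if_pos h, det_Bp]
    · rw [if_neg h, if_neg h]
  have hCccne : (C cc : MvPolynomial (Fin s) ℂ) ≠ 0 := by
    intro h
    exact hccne (by simpa using h)
  have himp : D ≠ 0 → (Amat (s+1) l).det ≠ 0 := by
    intro hDne h0
    have hk := key (LL s l) le_rfl
    rw [h0, map_zero, Polynomial.coeff_zero, if_pos rfl] at hk
    exact (mul_ne_zero hCccne hDne) hk.symm
  set Rpol : MvPolynomial (Fin (s+1)) ℂ :=
    (Amat (s+1) l).det - C cc * X (Fin.last s) ^ (LL s l) * rename Fin.castSucc D with hR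
  have hphiR : phiA s Rpol = phiA s ((Amat (s+1) l).det)
      - Polynomial.C (C cc * D) * Polynomial.X ^ (LL s l) := by
    rw [hR, map_sub, _root_.map_mul, _root_.map_mul, _root_.map_pow, phiA_X_last,
      phiA_rename, phiA_C, Polynomial.C_mul]
    ring
  have hcoeffR : ∀ m, LL s l ≤ m → (phiA s Rpol).coeff m = 0 := by
    intro m hm
    rw [hphiR, Polynomial.coeff_sub, key m hm, Polynomial.coeff_C_mul, Polynomial.coeff_X_pow]
    by_cases h : m = LL s l
    · rw [if_pos h, if_pos h, mul_one, sub_self]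
    · rw [if_neg h, if_neg h, mul_zero, sub_zero]
  have hLpos : 0 < LL s l := by
    have h1 : l ⟨3*s, by omega⟩ < l ⟨3*s+2, by omega⟩ := hl (Fin.mk_lt_mk.mpr (by omega))
    unfold LL
    omega
  have hdeg : Rpol.degreeOf (Fin.last s) < LL s l := by
    rw [← natDegree_phiA]
    by_cases h0 : phiA s Rpol = 0
    · rw [h0, Polynomial.natDegree_zero]
      exact hLpos
    · by_contra hge
      push_neg at hge
      exact h0 (Polynomial.leadingCoeff_eq_zero.mp (hcoeffR _ hge))
  refine ⟨cc, Rpol, hccne, ?_, hdeg, himp⟩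
  show (Amat (s+1) l).det
      = C cc * X (Fin.last s) ^ (LL s l) * rename Fin.castSucc D + Rpol
  rw [hR]
  ring
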